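/- (Proposition 1) In the latent class model with covariates, one full iteration of the nested EM algorithm does not decrease the observed-data log-likelihood: starting from (β⁽ᵗ⁾, π⁽ᵗ⁾) with all entries of π⁽ᵗ⁾ strictly positive, (i) compute responsibilities s̄ᵢᵣ at (β⁽ᵗ⁾, π⁽ᵗ⁾) and set π⁽ᵗ⁺¹⁾_{jr}(y) = Σᵢ s̄ᵢᵣ·1(y_{ij}=y)/Σᵢ s̄ᵢᵣ; (ii) for r = 1,…,R−1 in turn, recompute the responsibilities s̄ᵢᵣ using π⁽ᵗ⁺¹⁾ and the most recent coefficients (β_1⁽ᵗ⁺¹⁾,…,β_{r−1}⁽ᵗ⁺¹⁾, β_r⁽ᵗ⁾,…,β_{R−1}⁽ᵗ⁾), set offsets aᵢ = log(Σ_{l≠r} exp(x_iᵀβ_l)) from these most recent coefficients, ψᵢ = x_iᵀβ_r⁽ᵗ⁾ − aᵢ, weights ωᵢ = tanh(ψᵢ/2)/(2ψᵢ) (with ωᵢ = 1/4 if ψᵢ = 0), ηᵢ = (s̄ᵢᵣ − 1/2 + ωᵢ·aᵢ)/ωᵢ, and, assuming XᵀΩX is invertible at each cycle (Ω = diag(ω)),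 update β_r⁽ᵗ⁺¹⁾ = (XᵀΩX)⁻¹XᵀΩη. Then ℓ(β⁽ᵗ⁺¹⁾, π⁽ᵗ⁺¹⁾) ≥ ℓ(β⁽ᵗ⁾, π⁽ᵗ⁾). -/

import Mathlib

namespace LCR15

open Matrix

/-- Class probabilities `ν_r(x) = exp(xᵀβ_r)/Σ_l exp(xᵀβ_l)`. -/
noncomputable def nu {P R : ℕ} (xi : Fin P → ℝ) (β : Fin R → Fin P → ℝ) (r : Fin R) : ℝ :=
  Real.exp (∑ p, xi p * β r p) / (∑ l, Real.exp (∑ p, xi p * β l p))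

/-- Observed-data log-likelihood
`ℓ(β, π) = Σᵢ log[Σᵣ ν_r(xᵢ)·Πⱼ π_{jr}(y_{ij})]`. -/
noncomputable def loglik {n P R J : ℕ} {K : Fin J → ℕ}
    (x : Fin n → Fin P → ℝ) (y : ∀ _ : Fin n, ∀ j : Fin J, Fin (K j))
    (β : Fin R → Fin P → ℝ) (π : ∀ j : Fin J, Fin R → Fin (K j) → ℝ) : ℝ :=
  ∑ i, Real.log (∑ r, nu (x i) β r * ∏ j, π j r (y i j))

/-- Responsibilities
`s̄ᵢᵣ = ν_r(xᵢ)·Πⱼ π_{jr}(y_{ij}) / Σ_l ν_l(xᵢ)·Πⱼ π_{jl}(y_{ij})`. -/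
noncomputable def sbar {n P R J : ℕ} {K : Fin J → ℕ}
    (x : Fin n → Fin P → ℝ) (y : ∀ _ : Fin n, ∀ j : Fin J, Fin (K j))
    (β : Fin R → Fin P → ℝ) (π : ∀ j : Fin J, Fin R → Fin (K j) → ℝ)
    (i : Fin n) (r : Fin R) : ℝ :=
  (nu (x i) β r * ∏ j, π j r (y i j)) / (∑ l, nu (x i) β l * ∏ j, π j l (y i j))

/-- Pólya-gamma weight `ω(ψ) = tanh(ψ/2)/(2ψ)`, extended by `1/4` at `ψ = 0`. -/
noncomputable def pgOmega (ψ : ℝ) : ℝ :=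
  if ψ = 0 then 1 / 4 else Real.tanh (ψ / 2) / (2 * ψ)

/-- Offsets `aᵢ = log(Σ_{l≠r} exp(xᵢᵀβ_l))` for the cycle updating `β_r`. -/
noncomputable def cycleA {n P R : ℕ} (x : Fin n → Fin P → ℝ)
    (β : Fin R → Fin P → ℝ) (r : Fin R) (i : Fin n) : ℝ :=
  Real.log (∑ l ∈ Finset.univ.erase r, Real.exp (∑ p, x i p * β l p))

/-- Pólya-gamma weights `ωᵢ = pgOmega(xᵢᵀβ_r − aᵢ)` for the cycle updating `β_r`. -/
noncomputable def cycleOmega {n P R : ℕ} (x : Fin n → Fin P → ℝ)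
    (β : Fin R → Fin P → ℝ) (r : Fin R) (i : Fin n) : ℝ :=
  pgOmega ((∑ p, x i p * β r p) - cycleA x β r i)

/-- The matrix `XᵀΩX` (with `Ω = diag(ω)`) for the cycle updating `β_r`. -/
noncomputable def cycleMat {n P R : ℕ} (x : Fin n → Fin P → ℝ)
    (β : Fin R → Fin P → ℝ) (r : Fin R) : Matrix (Fin P) (Fin P) ℝ :=
  (Matrix.of x)ᵀ * Matrix.diagonal (cycleOmega x β r) * Matrix.of x

/-- Working responses `ηᵢ = (s̄ᵢᵣ − 1/2 + ωᵢaᵢ)/ωᵢ` for the cycle updating `β_r`. -/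
noncomputable def cycleEta {n P R J : ℕ} {K : Fin J → ℕ}
    (x : Fin n → Fin P → ℝ) (y : ∀ _ : Fin n, ∀ j : Fin J, Fin (K j))
    (π : ∀ j : Fin J, Fin R → Fin (K j) → ℝ)
    (β : Fin R → Fin P → ℝ) (r : Fin R) (i : Fin n) : ℝ :=
  (sbar x y β π i r - 1 / 2 + cycleOmega x β r i * cycleA x β r i) / cycleOmega x β r i

/-- One Pólya-gamma conditional expectation–maximization cycle: replace `β_r` by
the weighted least squares solution `(XᵀΩX)⁻¹XᵀΩη`, keeping all other
coefficient vectors fixed. -/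
noncomputable def betaCycle {n P R J : ℕ} {K : Fin J → ℕ}
    (x : Fin n → Fin P → ℝ) (y : ∀ _ : Fin n, ∀ j : Fin J, Fin (K j))
    (π : ∀ j : Fin J, Fin R → Fin (K j) → ℝ)
    (r : Fin R) (β : Fin R → Fin P → ℝ) : Fin R → Fin P → ℝ :=
  Function.update β r
    ((cycleMat x β r)⁻¹ *ᵥ
      (((Matrix.of x)ᵀ * Matrix.diagonal (cycleOmega x β r)) *ᵥ cycleEta x y π β r))

/-- The coefficients after the first `k` nested cycles (cycles `r = 1, …, k`,
each using the most recent coefficients). -/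
noncomputable def betaAfter {n P R J : ℕ} {K : Fin J → ℕ}
    (x : Fin n → Fin P → ℝ) (y : ∀ _ : Fin n, ∀ j : Fin J, Fin (K j))
    (π : ∀ j : Fin J, Fin R → Fin (K j) → ℝ)
    (β0 : Fin R → Fin P → ℝ) : ℕ → Fin R → Fin P → ℝ
  | 0 => β0
  | k + 1 =>
      if h : k < R then betaCycle x y π ⟨k, h⟩ (betaAfter x y π β0 k)
      else betaAfter x y π β0 k




lemma tanh_nonneg {a : ℝ} (ha : 0 ≤ a) : 0 ≤ Real.tanh a := by
  rw [Real.tanh_eq_sinh_div_cosh]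
  exact div_nonneg (by simpa using ha) (Real.cosh_pos a).le

lemma self_le_sinh_mul_cosh {a : ℝ} (ha : 0 ≤ a) : a ≤ Real.sinh a * Real.cosh a := by
  have h := Real.self_le_sinh_iff.2 (by positivity : (0:ℝ) ≤ 2 * a)
  have h2 : Real.sinh (2*a) = 2 * Real.sinh a * Real.cosh a := by
    rw [two_mul, Real.sinh_add]; ring
  nlinarith

lemma sinh_le_self_mul_cosh {a : ℝ} (ha : 0 ≤ a) : Real.sinh a ≤ a * Real.cosh a := by
  have hmono : MonotoneOn (fun t => t * Real.cosh t - Real.sinh t) (Set.Ici (0:ℝ)) := by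
    apply monotoneOn_of_deriv_nonneg (convex_Ici 0)
    · exact (Continuous.mul continuous_id Real.continuous_cosh).sub Real.continuous_sinh |>.continuousOn
    · intro t _
      exact ((differentiable_id.mul Real.differentiable_cosh).sub Real.differentiable_sinh) t |>.differentiableWithinAt
    · intro t ht
      rw [interior_Ici, Set.mem_Ioi] at ht
      have hd : HasDerivAt (fun t => t * Real.cosh t - Real.sinh t) (t * Real.sinh t) t := by
        have := ((hasDerivAt_id t).mul (Real.hasDerivAt_cosh t)).sub (Real.hasDerivAt_sinh t)
        simp only [id] at this
        exact this.congr_deriv (by ring)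
      rw [hd.deriv]
      exact mul_nonneg ht.le (Real.sinh_nonneg_iff.2 ht.le)
  have := hmono (Set.mem_Ici.2 le_rfl) (Set.mem_Ici.2 ha) ha
  simpa using this

lemma tanh_le_self {a : ℝ} (ha : 0 ≤ a) : Real.tanh a ≤ a := by
  rw [Real.tanh_eq_sinh_div_cosh, div_le_iff₀ (Real.cosh_pos a)]
  exact sinh_le_self_mul_cosh ha

lemma hasDerivAt_tanh (x : ℝ) : HasDerivAt Real.tanh (1 / Real.cosh x ^ 2) x := by
  have h : HasDerivAt (fun t => Real.sinh t / Real.cosh t)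
      ((Real.cosh x * Real.cosh x - Real.sinh x * Real.sinh x) / Real.cosh x ^ 2) x :=
    (Real.hasDerivAt_sinh x).div (Real.hasDerivAt_cosh x) (Real.cosh_pos x).ne'
  have heq : (Real.cosh x * Real.cosh x - Real.sinh x * Real.sinh x) = 1 := by
    have := Real.cosh_sq_sub_sinh_sq x; nlinarith
  have : HasDerivAt (fun t => Real.sinh t / Real.cosh t) (1 / Real.cosh x ^ 2) x := by
    rw [← heq]; exact h
  exact this.congr_of_eventuallyEq (Filter.Eventually.of_forall fun t => (Real.tanh_eq_sinh_div_cosh t))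

lemma hasDerivAt_logcosh (x : ℝ) :
    HasDerivAt (fun t => Real.log (Real.cosh t)) (Real.tanh x) x := by
  have h := (Real.hasDerivAt_cosh x).log (Real.cosh_pos x).ne'
  simpa [Real.tanh_eq_sinh_div_cosh] using h

/-- `tanh t / t` is antitone: for `0 < a ≤ b`, `a * tanh b ≤ b * tanh a`. -/
lemma mul_tanh_anti {a b : ℝ} (ha : 0 < a) (hab : a ≤ b) :
    a * Real.tanh b ≤ b * Real.tanh a := by
  have key : ∀ t ∈ Set.Ici a, ∀ t' ∈ Set.Ici a, t ≤ t' →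
      t * Real.tanh a - a * Real.tanh t ≤ t' * Real.tanh a - a * Real.tanh t' := by
    intro t ht t' ht' htt'
    apply monotoneOn_of_deriv_nonneg (convex_Ici a) _ _ _ ht ht' htt'
    · have hc : Continuous Real.tanh := by
        have : Real.tanh = fun t => Real.sinh t / Real.cosh t := funext Real.tanh_eq_sinh_div_cosh
        rw [this]
        exact Real.continuous_sinh.div Real.continuous_cosh fun t => (Real.cosh_pos t).ne'
      exact ((continuous_id.mul continuous_const).sub (continuous_const.mul hc)).continuousOn
    · intro s _
      have hdt : Differentiable ℝ Real.tanh := fun s => (hasDerivAt_tanh s).differentiableAt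
      exact (((differentiable_id.mul (differentiable_const _)).sub ((differentiable_const _).mul hdt)) s).differentiableWithinAt
    · intro s hs
      rw [interior_Ici, Set.mem_Ioi] at hs
      have hd : HasDerivAt (fun t => t * Real.tanh a - a * Real.tanh t)
          (Real.tanh a - a * (1 / Real.cosh s ^ 2)) s := by
        have := ((hasDerivAt_id s).mul_const (Real.tanh a)).sub
          ((hasDerivAt_tanh s).const_mul a)
        exact this.congr_deriv (by ring)
      rw [hd.deriv]
      have hcs : Real.cosh a ≤ Real.cosh s := by
        rw [Real.cosh_le_cosh]
        rw [abs_of_nonneg ha.le, abs_of_nonneg (ha.le.trans hs.le)]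
        exact hs.le
      have hca := Real.cosh_pos a
      have hcspos := Real.cosh_pos s
      have h1 : a / Real.cosh s ^ 2 ≤ a / Real.cosh a ^ 2 := by
        apply div_le_div_of_nonneg_left ha.le (by positivity)
        nlinarith
      have h2 : a / Real.cosh a ^ 2 ≤ Real.tanh a := by
        rw [Real.tanh_eq_sinh_div_cosh, div_le_div_iff₀ (by positivity) hca]
        have := self_le_sinh_mul_cosh ha.le
        nlinarith
      have : a * (1 / Real.cosh s ^ 2) = a / Real.cosh s ^ 2 := by ring
      rw [this]; linarith
  have := key a (Set.mem_Ici.2 le_rfl) b (Set.mem_Ici.2 hab) hab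
  simp only [sub_self] at this
  nlinarith [this]

lemma pgOmega_even (ψ : ℝ) : pgOmega (-ψ) = pgOmega ψ := by
  unfold pgOmega
  by_cases h : ψ = 0
  · simp [h]
  · rw [if_neg (by simpa using h), if_neg h]
    rw [neg_div, Real.tanh_neg]
    ring

lemma pgOmega_pos (ψ : ℝ) : 0 < pgOmega ψ := by
  unfold pgOmega
  by_cases h : ψ = 0
  · simp [h]
  · rw [if_neg h]
    rcases lt_or_gt_of_ne h with hneg | hpos
    · have : Real.tanh (ψ/2) < 0 := by
        rw [Real.tanh_eq_sinh_div_cosh]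
        exact div_neg_of_neg_of_pos (Real.sinh_neg_iff.2 (by linarith)) (Real.cosh_pos _)
      exact div_pos_of_neg_of_neg this (by linarith)
    · apply div_pos _ (by linarith)
      rw [Real.tanh_eq_sinh_div_cosh]
      exact div_pos (Real.sinh_pos_iff.2 (by linarith)) (Real.cosh_pos _)



lemma pgOmega_two_mul {v : ℝ} (hv : 0 < v) : 2 * pgOmega (2*v) = Real.tanh v / (2*v) := by
  unfold pgOmega
  rw [if_neg (by positivity)]
  have : 2*v/2 = v := by ring
  rw [this]; ring

lemma logcosh_quad_nonneg {u v : ℝ} (hu : 0 ≤ u) (hv : 0 ≤ v) :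
    Real.log (Real.cosh u) ≤ Real.log (Real.cosh v) + (2 * pgOmega (2*v)) * (u^2 - v^2) := by
  set W := 2 * pgOmega (2*v) with hW
  have hdiff : ∀ s : ℝ, HasDerivAt (fun t => Real.log (Real.cosh v) + W*(t^2 - v^2)
      - Real.log (Real.cosh t)) (W*(2*s) - Real.tanh s) s := by
    intro s
    have h1 : HasDerivAt (fun t : ℝ => Real.log (Real.cosh v) + W*(t^2 - v^2)) (W*(2*s)) s := by
      have : HasDerivAt (fun t : ℝ => t^2 - v^2) (2*s) s := by
        simpa using ((hasDerivAt_pow 2 s).sub_const (v^2))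
      simpa using (this.const_mul W).const_add (Real.log (Real.cosh v))
    exact h1.sub (hasDerivAt_logcosh s)
  set F := fun t => Real.log (Real.cosh v) + W*(t^2 - v^2) - Real.log (Real.cosh t) with hF
  have hFv : F v = 0 := by simp [hF]
  have hcont : Continuous F := by
    have := fun s => (hdiff s).differentiableAt
    exact (Differentiable.continuous this)
  have key : 0 ≤ F u := by
    rcases le_total v u with hvu | huv
    · -- monotone on [v, u]
      have hmono : MonotoneOn F (Set.Ici v) := by
        apply monotoneOn_of_deriv_nonneg (convex_Ici v) hcont.continuousOn
          (fun s _ => (hdiff s).differentiableAt.differentiableWithinAt)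
        intro s hs
        rw [interior_Ici, Set.mem_Ioi] at hs
        rw [(hdiff s).deriv]
        have hs0 : 0 ≤ s := hv.trans hs.le
        rcases eq_or_lt_of_le hv with hv0 | hvpos
        · have : W = 1/2 := by simp [hW, ← hv0, pgOmega]; norm_num
          rw [this]
          have := tanh_le_self hs0
          linarith
        · rw [hW, pgOmega_two_mul hvpos]
          have h := mul_tanh_anti hvpos hs.le
          rw [div_mul_eq_mul_div, sub_nonneg, le_div_iff₀ (by linarith)]
          nlinarith
      have := hmono (Set.mem_Ici.2 le_rfl) (Set.mem_Ici.2 hvu) hvu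
      rwa [hFv] at this
    · -- antitone on [u, v]
      have hanti : AntitoneOn F (Set.Icc u v) := by
        apply antitoneOn_of_deriv_nonpos (convex_Icc u v) hcont.continuousOn
          (fun s _ => (hdiff s).differentiableAt.differentiableWithinAt)
        intro s hs
        rw [interior_Icc] at hs
        obtain ⟨hsu, hsv⟩ := hs
        have hs0 : 0 ≤ s := hu.trans hsu.le
        have hvpos : 0 < v := hs0.trans_lt hsv
        rw [(hdiff s).deriv, hW, pgOmega_two_mul hvpos]
        rcases eq_or_lt_of_le hs0 with hs0' | hspos
        · simp [← hs0', Real.tanh_zero]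
        · have h := mul_tanh_anti hspos hsv.le
          rw [div_mul_eq_mul_div, sub_nonpos, div_le_iff₀ (by linarith)]
          nlinarith
      have := hanti (Set.mem_Icc.2 ⟨le_rfl, huv⟩) (Set.mem_Icc.2 ⟨huv, le_rfl⟩) huv
      rwa [hFv] at this
  simpa [hF] using key

lemma pgOmega_abs (v : ℝ) : pgOmega |v| = pgOmega v := by
  rcases abs_cases v with ⟨h, _⟩ | ⟨h, _⟩
  · rw [h]
  · rw [h, pgOmega_even]

lemma logcosh_quad (u v : ℝ) :
    Real.log (Real.cosh u) ≤ Real.log (Real.cosh v) + (2 * pgOmega (2*v)) * (u^2 - v^2) := by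
  have h := logcosh_quad_nonneg (abs_nonneg u) (abs_nonneg v)
  have e1 : Real.cosh |u| = Real.cosh u := Real.cosh_abs u
  have e2 : Real.cosh |v| = Real.cosh v := Real.cosh_abs v
  have e3 : pgOmega (2*|v|) = pgOmega (2*v) := by
    have : (2:ℝ)*|v| = |2*v| := by rw [abs_mul]; norm_num
    rw [this, pgOmega_abs]
  have e4 : |u|^2 = u^2 := sq_abs u
  have e5 : |v|^2 = v^2 := sq_abs v
  rw [e1, e2, e3, e4, e5] at h
  exact h

/-- The Pólya-gamma / Jaakkola–Jordan quadratic bound. -/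
lemma pg_bound (ψ t : ℝ) :
    Real.log (1 + Real.exp t) ≤ Real.log (1 + Real.exp ψ) + (t - ψ)/2
      + pgOmega ψ / 2 * (t^2 - ψ^2) := by
  have key : ∀ s : ℝ, Real.log (1 + Real.exp s) = s/2 + Real.log 2
      + Real.log (Real.cosh (s/2)) := by
    intro s
    have h1 : 1 + Real.exp s = Real.exp (s/2) * (2 * Real.cosh (s/2)) := by
      rw [Real.cosh_eq]
      have ha : Real.exp (s/2) * Real.exp (s/2) = Real.exp s := by
        rw [← Real.exp_add]; ring_nf
      have hb : Real.exp (s/2) * Real.exp (-(s/2)) = 1 := by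
        rw [← Real.exp_add]; simp
      linear_combination (-1:ℝ)*ha + (-1:ℝ)*hb
    rw [h1, Real.log_mul (Real.exp_pos _).ne' (by positivity), Real.log_exp,
      Real.log_mul (by norm_num) (Real.cosh_pos _).ne']
    ring
  rw [key t, key ψ]
  have h := logcosh_quad (t/2) (ψ/2)
  have e : (2:ℝ) * (ψ/2) = ψ := by ring
  rw [e] at h
  nlinarith [h]


lemma jensen_logsum {ι : Type*} [Fintype ι] [Nonempty ι] (a b : ι → ℝ)
    (ha : ∀ r, 0 < a r) (hb : ∀ r, 0 < b r) :
    ∑ r, (a r / ∑ l, a l) * (Real.log (b r) - Real.log (a r))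
      ≤ Real.log (∑ r, b r) - Real.log (∑ r, a r) := by
  have hA : 0 < ∑ l, a l := Finset.sum_pos (fun r _ => ha r) Finset.univ_nonempty
  have hB : 0 < ∑ l, b l := Finset.sum_pos (fun r _ => hb r) Finset.univ_nonempty
  have hterm : ∀ r, (a r / ∑ l, a l) * (Real.log (b r) - Real.log (a r))
      ≤ (b r / ∑ l, b l - a r / ∑ l, a l)
        + (a r / ∑ l, a l) * (Real.log (∑ l, b l) - Real.log (∑ l, a l)) := by
    intro r
    have hc : (0:ℝ) < b r * (∑ l, a l) / (a r * (∑ l, b l)) := by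
      have := ha r; have := hb r; positivity
    have hlog := Real.log_le_sub_one_of_pos hc
    have hre : Real.log (b r * (∑ l, a l) / (a r * (∑ l, b l)))
        = Real.log (b r) - Real.log (a r)
          - (Real.log (∑ l, b l) - Real.log (∑ l, a l)) := by
      rw [Real.log_div (mul_pos (hb r) hA).ne' (mul_pos (ha r) hB).ne',
        Real.log_mul (hb r).ne' hA.ne', Real.log_mul (ha r).ne' hB.ne']
      ring
    rw [hre] at hlog
    have hw : (0:ℝ) ≤ a r / ∑ l, a l := by have := ha r; positivity
    have hmul := mul_le_mul_of_nonneg_left hlog hw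
    have hsimp : (a r / ∑ l, a l) * (b r * (∑ l, a l) / (a r * (∑ l, b l)) - 1)
        = b r / ∑ l, b l - a r / ∑ l, a l := by
      have h1 : a r ≠ 0 := (ha r).ne'
      have h2 : (∑ l, a l) ≠ 0 := hA.ne'
      have h3 : (∑ l, b l) ≠ 0 := hB.ne'
      field_simp
    rw [hsimp] at hmul
    nlinarith [hmul]
  calc ∑ r, (a r / ∑ l, a l) * (Real.log (b r) - Real.log (a r))
      ≤ ∑ r, ((b r / ∑ l, b l - a r / ∑ l, a l)
        + (a r / ∑ l, a l) * (Real.log (∑ l, b l) - Real.log (∑ l, a l))) :=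
        Finset.sum_le_sum fun r _ => hterm r
    _ = Real.log (∑ l, b l) - Real.log (∑ l, a l) := by
        rw [Finset.sum_add_distrib, Finset.sum_sub_distrib, ← Finset.sum_div,
          ← Finset.sum_div, ← Finset.sum_mul, ← Finset.sum_div,
          div_self hB.ne', div_self hA.ne']
        ring

lemma gibbs {ι : Type*} [Fintype ι] (p q : ι → ℝ) (hp : ∀ i, 0 ≤ p i) (hq : ∀ i, 0 < q i)
    (hps : ∑ i, p i = 1) (hqs : ∑ i, q i = 1) :
    ∑ i, p i * Real.log (q i) ≤ ∑ i, p i * Real.log (p i) := by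
  have key : ∀ i, p i * Real.log (q i) - p i * Real.log (p i) ≤ q i - p i := by
    intro i
    rcases eq_or_lt_of_le (hp i) with h0 | hpos
    · rw [← h0]; simp [(hq i).le]
    · have hlog := Real.log_le_sub_one_of_pos (div_pos (hq i) hpos)
      rw [Real.log_div (hq i).ne' hpos.ne'] at hlog
      have hmul := mul_le_mul_of_nonneg_left hlog hpos.le
      have : p i * (q i / p i - 1) = q i - p i := by field_simp
      rw [this] at hmul
      nlinarith [hmul]
  have hsum := Finset.sum_le_sum (fun i (_ : i ∈ Finset.univ) => key i)
  rw [Finset.sum_sub_distrib, Finset.sum_sub_distrib, hps, hqs] at hsum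
  linarith

lemma wls {n P : ℕ} (x : Fin n → Fin P → ℝ) (ω : Fin n → ℝ) (hω : ∀ i, 0 ≤ ω i)
    (η : Fin n → ℝ) (bstar b : Fin P → ℝ)
    (hnormal : ∀ p, ∑ i, x i p * (ω i * ((∑ q, x i q * bstar q) - η i)) = 0) :
    ∑ i, ω i * ((∑ q, x i q * bstar q) - η i)^2
      ≤ ∑ i, ω i * ((∑ q, x i q * b q) - η i)^2 := by
  set u := fun i => (∑ q, x i q * bstar q) - η i with hu
  have hcross : ∑ i, ω i * u i * ((∑ q, x i q * b q) - (∑ q, x i q * bstar q)) = 0 := by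
    calc ∑ i, ω i * u i * ((∑ q, x i q * b q) - (∑ q, x i q * bstar q))
        = ∑ i, ∑ q, x i q * (ω i * u i) * (b q - bstar q) := by
          apply Finset.sum_congr rfl; intro i _
          rw [← Finset.sum_sub_distrib, Finset.mul_sum]
          exact Finset.sum_congr rfl fun q _ => by ring
      _ = ∑ q, (∑ i, x i q * (ω i * u i)) * (b q - bstar q) := by
          rw [Finset.sum_comm]
          apply Finset.sum_congr rfl
          intro q _
          rw [Finset.sum_mul]
      _ = 0 := by
          apply Finset.sum_eq_zero; intro q _
          rw [hnormal q, zero_mul]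
  have hexp : ∀ i, ω i * ((∑ q, x i q * b q) - η i)^2
      = ω i * u i^2 + ω i * ((∑ q, x i q * b q) - (∑ q, x i q * bstar q))^2
        + 2 * (ω i * u i * ((∑ q, x i q * b q) - (∑ q, x i q * bstar q))) := by
    intro i; rw [hu]; ring
  have : ∑ i, ω i * ((∑ q, x i q * b q) - η i)^2
      = ∑ i, ω i * u i^2 + ∑ i, ω i * ((∑ q, x i q * b q) - (∑ q, x i q * bstar q))^2
        + 2 * ∑ i, (ω i * u i * ((∑ q, x i q * b q) - (∑ q, x i q * bstar q))) := by
    rw [show (2:ℝ) * ∑ i, (ω i * u i * ((∑ q, x i q * b q) - (∑ q, x i q * bstar q)))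
        = ∑ i, 2 * (ω i * u i * ((∑ q, x i q * b q) - (∑ q, x i q * bstar q))) from Finset.mul_sum _ _ _,
      ← Finset.sum_add_distrib, ← Finset.sum_add_distrib]
    exact Finset.sum_congr rfl fun i _ => hexp i
  rw [this, hcross]
  have h2 : 0 ≤ ∑ i, ω i * ((∑ q, x i q * b q) - (∑ q, x i q * bstar q))^2 :=
    Finset.sum_nonneg fun i _ => mul_nonneg (hω i) (sq_nonneg _)
  simp only [hu]
  linarith


section ModelLemmas

variable {n P R J : ℕ} {K : Fin J → ℕ}

lemma nu_pos (xi : Fin P → ℝ) (β : Fin R → Fin P → ℝ) (r : Fin R) : 0 < nu xi β r :=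
  div_pos (Real.exp_pos _)
    (Finset.sum_pos (fun l _ => Real.exp_pos _) ⟨r, Finset.mem_univ r⟩)

lemma mixture_pos (hR : 0 < R) (x : Fin n → Fin P → ℝ)
    (y : ∀ _ : Fin n, ∀ j : Fin J, Fin (K j))
    (β : Fin R → Fin P → ℝ) (π : ∀ j : Fin J, Fin R → Fin (K j) → ℝ) (i : Fin n)
    (hb : ∀ l, 0 < ∏ j, π j l (y i j)) :
    0 < ∑ l, nu (x i) β l * ∏ j, π j l (y i j) :=
  Finset.sum_pos (fun l _ => mul_pos (nu_pos _ _ _) (hb l)) ⟨⟨0, hR⟩, Finset.mem_univ _⟩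

lemma sbar_pos (hR : 0 < R) (x : Fin n → Fin P → ℝ)
    (y : ∀ _ : Fin n, ∀ j : Fin J, Fin (K j))
    (β : Fin R → Fin P → ℝ) (π : ∀ j : Fin J, Fin R → Fin (K j) → ℝ) (i : Fin n) (r : Fin R)
    (hb : ∀ l, 0 < ∏ j, π j l (y i j)) :
    0 < sbar x y β π i r :=
  div_pos (mul_pos (nu_pos _ _ _) (hb r)) (mixture_pos hR x y β π i hb)

lemma sbar_sum (hR : 0 < R) (x : Fin n → Fin P → ℝ)
    (y : ∀ _ : Fin n, ∀ j : Fin J, Fin (K j))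
    (β : Fin R → Fin P → ℝ) (π : ∀ j : Fin J, Fin R → Fin (K j) → ℝ) (i : Fin n)
    (hb : ∀ l, 0 < ∏ j, π j l (y i j)) :
    ∑ l, sbar x y β π i l = 1 := by
  unfold sbar
  rw [← Finset.sum_div, div_self (mixture_pos hR x y β π i hb).ne']

lemma loglik_ge (hR : 0 < R) (x : Fin n → Fin P → ℝ)
    (y : ∀ _ : Fin n, ∀ j : Fin J, Fin (K j))
    (β β' : Fin R → Fin P → ℝ) (π π' : ∀ j : Fin J, Fin R → Fin (K j) → ℝ)
    (ha : ∀ i l, 0 < ∏ j, π j l (y i j)) (hb : ∀ i l, 0 < ∏ j, π' j l (y i j)) :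
    loglik x y β π + ∑ i, ∑ r, sbar x y β π i r *
      (Real.log (nu (x i) β' r * ∏ j, π' j r (y i j))
        - Real.log (nu (x i) β r * ∏ j, π j r (y i j)))
      ≤ loglik x y β' π' := by
  have hne : Nonempty (Fin R) := ⟨⟨0, hR⟩⟩
  unfold loglik
  rw [← Finset.sum_add_distrib]
  apply Finset.sum_le_sum
  intro i _
  have h := jensen_logsum (fun l => nu (x i) β l * ∏ j, π j l (y i j))
    (fun l => nu (x i) β' l * ∏ j, π' j l (y i j))
    (fun l => mul_pos (nu_pos _ _ _) (ha i l)) (fun l => mul_pos (nu_pos _ _ _) (hb i l))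
  unfold sbar
  linarith [h]

lemma pi_step (hn : 0 < n) (hR : 0 < R) (x : Fin n → Fin P → ℝ)
    (y : ∀ _ : Fin n, ∀ j : Fin J, Fin (K j))
    (β : Fin R → Fin P → ℝ) (π : ∀ j : Fin J, Fin R → Fin (K j) → ℝ)
    (hπ_pos : ∀ j r yv, 0 < π j r yv)
    (hπ_sum : ∀ j r, ∑ yv, π j r yv = 1)
    (π' : ∀ j : Fin J, Fin R → Fin (K j) → ℝ)
    (hπ' : ∀ j r yv, π' j r yv =
      (∑ i, sbar x y β π i r * (if y i j = yv then (1 : ℝ) else 0)) /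
        (∑ i, sbar x y β π i r)) :
    loglik x y β π ≤ loglik x y β π' := by
  have hnn : Nonempty (Fin n) := ⟨⟨0, hn⟩⟩
  have ha : ∀ i l, 0 < ∏ j, π j l (y i j) :=
    fun i l => Finset.prod_pos fun j _ => hπ_pos j l _
  have hs : ∀ i l, 0 < sbar x y β π i l := fun i l => sbar_pos hR x y β π i l (ha i)
  have hS : ∀ r : Fin R, 0 < ∑ i, sbar x y β π i r :=
    fun r => Finset.sum_pos (fun i _ => hs i r) Finset.univ_nonempty
  have hind_nonneg : ∀ (i : Fin n) (j : Fin J) (yv : Fin (K j)),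
      (0:ℝ) ≤ (if y i j = yv then (1:ℝ) else 0) := by
    intro i j yv; split <;> norm_num
  have hcv_nonneg : ∀ (j : Fin J) (r : Fin R) (yv : Fin (K j)),
      0 ≤ ∑ i, sbar x y β π i r * (if y i j = yv then (1:ℝ) else 0) :=
    fun j r yv => Finset.sum_nonneg fun i _ => mul_nonneg (hs i r).le (hind_nonneg i j yv)
  have hπ'_nonneg : ∀ j r yv, 0 ≤ π' j r yv := by
    intro j r yv; rw [hπ']
    exact div_nonneg (hcv_nonneg j r yv) (hS r).le
  have hπ'_sum : ∀ j r, ∑ yv, π' j r yv = 1 := by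
    intro j r
    rw [Finset.sum_congr rfl fun yv _ => hπ' j r yv, ← Finset.sum_div,
      div_eq_one_iff_eq (hS r).ne', Finset.sum_comm]
    apply Finset.sum_congr rfl; intro i _
    rw [← Finset.mul_sum]
    have : (∑ yv, if y i j = yv then (1:ℝ) else 0) = 1 := by
      rw [Finset.sum_ite_eq]; simp
    rw [this, mul_one]
  have hπ'_obs : ∀ (j : Fin J) (r : Fin R) (i : Fin n), 0 < π' j r (y i j) := by
    intro j r i
    rw [hπ']
    apply div_pos _ (hS r)
    apply Finset.sum_pos' (fun i' _ => mul_nonneg (hs i' r).le (hind_nonneg i' j _))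
    exact ⟨i, Finset.mem_univ i, by simp [hs i r]⟩
  have hb : ∀ i l, 0 < ∏ j, π' j l (y i j) :=
    fun i l => Finset.prod_pos fun j _ => hπ'_obs j l i
  have hkey := loglik_ge hR x y β β π π' ha hb
  have hlogdiff : ∀ (i : Fin n) (r : Fin R),
      Real.log (nu (x i) β r * ∏ j, π' j r (y i j))
        - Real.log (nu (x i) β r * ∏ j, π j r (y i j))
      = ∑ j, (Real.log (π' j r (y i j)) - Real.log (π j r (y i j))) := by
    intro i r
    rw [Real.log_mul (nu_pos _ β r).ne' (hb i r).ne',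
      Real.log_mul (nu_pos _ β r).ne' (ha i r).ne',
      Real.log_prod (fun j _ => (hπ'_obs j r i).ne'),
      Real.log_prod (fun j _ => (hπ_pos j r _).ne'),
      Finset.sum_sub_distrib]
    ring
  have hfix : ∀ (r : Fin R) (j : Fin J),
      0 ≤ ∑ i, sbar x y β π i r * (Real.log (π' j r (y i j)) - Real.log (π j r (y i j))) := by
    intro r j
    set s := fun i => sbar x y β π i r with hs_def
    set cv := fun yv => ∑ i, s i * (if y i j = yv then (1:ℝ) else 0) with hcv_def
    have hcollapse : ∀ (c : Fin (K j) → ℝ), ∑ i, s i * c (y i j) = ∑ yv, cv yv * c yv := by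
      intro c
      have h1 : ∀ i, s i * c (y i j)
          = ∑ yv, s i * (if y i j = yv then (1:ℝ) else 0) * c yv := by
        intro i
        have : ∀ yv, s i * (if y i j = yv then (1:ℝ) else 0) * c yv
            = (if y i j = yv then s i * c yv else 0) := by
          intro yv; split <;> ring
        rw [Finset.sum_congr rfl fun yv _ => this yv, Finset.sum_ite_eq]
        simp
      rw [Finset.sum_congr rfl fun i _ => h1 i, Finset.sum_comm]
      apply Finset.sum_congr rfl; intro yv _
      rw [hcv_def, Finset.sum_mul]
    have hdiff : ∑ i, s i * (Real.log (π' j r (y i j)) - Real.log (π j r (y i j)))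
        = ∑ yv, cv yv * (Real.log (π' j r yv) - Real.log (π j r yv)) :=
      hcollapse (fun yv => Real.log (π' j r yv) - Real.log (π j r yv))
    have hcvS : ∀ yv, cv yv = (∑ i, s i) * π' j r yv := by
      intro yv
      rw [hπ' j r yv, mul_div_cancel₀ _ (hS r).ne']
    have hg := gibbs (fun yv => π' j r yv) (fun yv => π j r yv)
      (fun yv => hπ'_nonneg j r yv) (fun yv => hπ_pos j r yv) (hπ'_sum j r) (hπ_sum j r)
    have hgibbs : 0 ≤ ∑ yv, π' j r yv * (Real.log (π' j r yv) - Real.log (π j r yv)) := by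
      rw [Finset.sum_congr rfl fun yv _ => mul_sub (π' j r yv) _ _, Finset.sum_sub_distrib]
      linarith [hg]
    rw [hdiff, Finset.sum_congr rfl fun yv _ => by rw [hcvS yv]]
    calc (0:ℝ) ≤ (∑ i, s i) * ∑ yv, π' j r yv * (Real.log (π' j r yv) - Real.log (π j r yv)) :=
          mul_nonneg (hS r).le hgibbs
      _ = ∑ yv, (∑ i, s i) * π' j r yv * (Real.log (π' j r yv) - Real.log (π j r yv)) := by
          rw [Finset.mul_sum]
          exact Finset.sum_congr rfl fun yv _ => by ring
  have hmain : 0 ≤ ∑ i, ∑ r, sbar x y β π i r *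
      (Real.log (nu (x i) β r * ∏ j, π' j r (y i j))
        - Real.log (nu (x i) β r * ∏ j, π j r (y i j))) := by
    rw [Finset.sum_congr rfl fun i (_ : i ∈ Finset.univ) => Finset.sum_congr rfl
      fun r (_ : r ∈ Finset.univ) => by rw [hlogdiff i r, Finset.mul_sum]]
    rw [Finset.sum_comm]
    apply Finset.sum_nonneg
    intro r _
    rw [Finset.sum_comm]
    apply Finset.sum_nonneg
    intro j _
    exact hfix r j
  linarith [hkey, hmain]

lemma cycle_step (hR : 2 ≤ R) (x : Fin n → Fin P → ℝ)
    (y : ∀ _ : Fin n, ∀ j : Fin J, Fin (K j))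
    (π' : ∀ j : Fin J, Fin R → Fin (K j) → ℝ)
    (hb : ∀ i l, 0 < ∏ j, π' j l (y i j))
    (βc : Fin R → Fin P → ℝ) (r : Fin R)
    (hinv : IsUnit (cycleMat x βc r)) :
    loglik x y βc π' ≤ loglik x y (betaCycle x y π' r βc) π' := by
  have hR0 : 0 < R := by omega
  set βn := betaCycle x y π' r βc with hβn
  set a := cycleA x βc r with ha_def
  set ω := cycleOmega x βc r with hω_def
  set η := cycleEta x y π' βc r with hη_def
  set bstar := (cycleMat x βc r)⁻¹ *ᵥ
      (((Matrix.of x)ᵀ * Matrix.diagonal ω) *ᵥ η) with hbstar_def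
  have hβn_r : βn r = bstar := by
    rw [hβn]; unfold betaCycle; rw [Function.update_self]
  have hβn_ne : ∀ l, l ≠ r → βn l = βc l := by
    intro l hl; rw [hβn]; unfold betaCycle; rw [Function.update_of_ne hl]
  have hωpos : ∀ i, 0 < ω i := fun i => pgOmega_pos _
  have herase : (Finset.univ.erase r).Nonempty := by
    rw [← Finset.card_pos, Finset.card_erase_of_mem (Finset.mem_univ r),
      Finset.card_univ, Fintype.card_fin]
    omega
  have hexpa : ∀ i, Real.exp (a i)
      = ∑ l ∈ Finset.univ.erase r, Real.exp (∑ p, x i p * βc l p) := by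
    intro i; rw [ha_def]; unfold cycleA
    exact Real.exp_log (Finset.sum_pos (fun l _ => Real.exp_pos _) herase)
  set ψ := fun i => (∑ p, x i p * βc r p) - a i with hψ_def
  set ψ' := fun i => (∑ p, x i p * bstar p) - a i with hψ'_def
  have hsumexp : ∀ i, (∑ l, Real.exp (∑ p, x i p * βc l p))
      = Real.exp (a i) * (1 + Real.exp (ψ i)) := by
    intro i
    rw [← Finset.add_sum_erase _ _ (Finset.mem_univ r), ← hexpa i]
    have : Real.exp (a i) * Real.exp (ψ i) = Real.exp (∑ p, x i p * βc r p) := by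
      rw [← Real.exp_add, hψ_def]; congr 1; ring
    nlinarith [this]
  have hsumexp' : ∀ i, (∑ l, Real.exp (∑ p, x i p * βn l p))
      = Real.exp (a i) * (1 + Real.exp (ψ' i)) := by
    intro i
    rw [← Finset.add_sum_erase _ _ (Finset.mem_univ r)]
    have he : (∑ l ∈ Finset.univ.erase r, Real.exp (∑ p, x i p * βn l p))
        = ∑ l ∈ Finset.univ.erase r, Real.exp (∑ p, x i p * βc l p) := by
      apply Finset.sum_congr rfl; intro l hl
      rw [hβn_ne l (Finset.ne_of_mem_erase hl)]
    rw [he, ← hexpa i]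
    have : Real.exp (a i) * Real.exp (ψ' i) = Real.exp (∑ p, x i p * βn r p) := by
      rw [← Real.exp_add, hψ'_def, hβn_r]; congr 1; ring
    nlinarith [this]
  -- the log of the total exp-sum
  have hlogsum : ∀ i, Real.log (∑ l, Real.exp (∑ p, x i p * βc l p))
      = a i + Real.log (1 + Real.exp (ψ i)) := by
    intro i
    rw [hsumexp i, Real.log_mul (Real.exp_pos _).ne' (by positivity), Real.log_exp]
  have hlogsum' : ∀ i, Real.log (∑ l, Real.exp (∑ p, x i p * βn l p))
      = a i + Real.log (1 + Real.exp (ψ' i)) := by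
    intro i
    rw [hsumexp' i, Real.log_mul (Real.exp_pos _).ne' (by positivity), Real.log_exp]
  -- normal equations
  have hdet : IsUnit (cycleMat x βc r).det := (Matrix.isUnit_iff_isUnit_det _).mp hinv
  have hA : cycleMat x βc r *ᵥ bstar = ((Matrix.of x)ᵀ * Matrix.diagonal ω) *ᵥ η := by
    rw [hbstar_def, Matrix.mulVec_mulVec, Matrix.mul_nonsing_inv _ hdet, Matrix.one_mulVec]
  clear hbstar_def
  clear_value bstar
  have hnormal : ∀ p, ∑ i, x i p * (ω i * ((∑ q, x i q * bstar q) - η i)) = 0 := by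
    intro p
    have hA2 : (Matrix.of x)ᵀ *ᵥ (Matrix.diagonal ω *ᵥ (Matrix.of x *ᵥ bstar))
        = (Matrix.of x)ᵀ *ᵥ (Matrix.diagonal ω *ᵥ η) := by
      simp only [Matrix.mulVec_mulVec]
      rw [← Matrix.mul_assoc]
      rw [show ((Matrix.of x)ᵀ * Matrix.diagonal ω * Matrix.of x) = cycleMat x βc r from by
        rw [hω_def]; rfl]
      exact hA
    have h1 := congrFun hA2 p
    simp only [Matrix.mulVec, dotProduct, Matrix.transpose_apply, Matrix.of_apply,
      Matrix.diagonal_apply, ite_mul, zero_mul, Finset.sum_ite_eq, Finset.mem_univ,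
      if_true] at h1
    have hterm : ∀ i, x i p * (ω i * ((∑ q, x i q * bstar q) - η i))
        = x i p * (ω i * (∑ q, x i q * bstar q)) - x i p * (ω i * η i) := by
      intro i; ring
    rw [Finset.sum_congr rfl fun i _ => hterm i, Finset.sum_sub_distrib]
    rw [show (∑ i, x i p * (ω i * (∑ q, x i q * bstar q))) = ∑ i, x i p * (ω i * η i) from h1]
    exact sub_self _
  have hwls := wls x ω (fun i => (hωpos i).le) η bstar (βc r) hnormal
  -- per-observation surrogate inequality
  have hper : ∀ i, ω i / 2 * (((∑ q, x i q * βc r q) - η i)^2 - ((∑ q, x i q * bstar q) - η i)^2)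
      ≤ ∑ l, sbar x y βc π' i l *
        (Real.log (nu (x i) βn l * ∏ j, π' j l (y i j))
          - Real.log (nu (x i) βc l * ∏ j, π' j l (y i j))) := by
    intro i
    have hdenpos : (0:ℝ) < ∑ l, Real.exp (∑ p, x i p * βc l p) :=
      Finset.sum_pos (fun l _ => Real.exp_pos _) ⟨r, Finset.mem_univ r⟩
    have hdenpos' : (0:ℝ) < ∑ l, Real.exp (∑ p, x i p * βn l p) :=
      Finset.sum_pos (fun l _ => Real.exp_pos _) ⟨r, Finset.mem_univ r⟩
    have hlognu : ∀ (β0 : Fin R → Fin P → ℝ) (l : Fin R),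
        Real.log (nu (x i) β0 l * ∏ j, π' j l (y i j))
        = (∑ p, x i p * β0 l p) - Real.log (∑ m, Real.exp (∑ p, x i p * β0 m p))
          + Real.log (∏ j, π' j l (y i j)) := by
      intro β0 l
      have hd : (0:ℝ) < ∑ m, Real.exp (∑ p, x i p * β0 m p) :=
        Finset.sum_pos (fun m _ => Real.exp_pos _) ⟨r, Finset.mem_univ r⟩
      rw [Real.log_mul (nu_pos _ _ _).ne' (hb i l).ne']
      unfold nu
      rw [Real.log_div (Real.exp_pos _).ne' hd.ne', Real.log_exp]
    have hterm : ∀ l, sbar x y βc π' i l *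
        (Real.log (nu (x i) βn l * ∏ j, π' j l (y i j))
          - Real.log (nu (x i) βc l * ∏ j, π' j l (y i j)))
        = sbar x y βc π' i l * ((∑ p, x i p * βn l p) - (∑ p, x i p * βc l p))
          - sbar x y βc π' i l *
            (Real.log (1 + Real.exp (ψ' i)) - Real.log (1 + Real.exp (ψ i))) := by
      intro l
      rw [hlognu βn l, hlognu βc l, hlogsum i, hlogsum' i]
      ring
    rw [Finset.sum_congr rfl fun l _ => hterm l, Finset.sum_sub_distrib, ← Finset.sum_mul,
      sbar_sum hR0 x y βc π' i (hb i), one_mul]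
    -- first sum collapses to the r-term
    have hcollapse : ∑ l, sbar x y βc π' i l * ((∑ p, x i p * βn l p) - (∑ p, x i p * βc l p))
        = sbar x y βc π' i r * (ψ' i - ψ i) := by
      rw [Finset.sum_eq_single r]
      · rw [hβn_r]; simp only [hψ'_def, hψ_def]; ring
      · intro l _ hl
        rw [hβn_ne l hl, sub_self, mul_zero]
      · intro h; exact absurd (Finset.mem_univ r) h
    rw [hcollapse]
    -- Pólya-gamma bound
    have hpg := pg_bound (ψ i) (ψ' i)
    have hωeq : pgOmega (ψ i) = ω i := by
      rw [hω_def]; unfold cycleOmega; rw [hψ_def, ha_def]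
    rw [hωeq] at hpg
    -- quadratic identity
    have hηω : η i * ω i = sbar x y βc π' i r - 1/2 + ω i * a i := by
      have hω0 : ω i ≠ 0 := (hωpos i).ne'
      rw [hη_def]; unfold cycleEta
      rw [← hω_def, ← ha_def]
      field_simp
    have hring : sbar x y βc π' i r * (ψ' i - ψ i)
        - ((ψ' i - ψ i)/2 + ω i / 2 * ((ψ' i)^2 - (ψ i)^2))
        = ω i / 2 * (((∑ q, x i q * βc r q) - η i)^2 - ((∑ q, x i q * bstar q) - η i)^2) := by
      have hψe : ψ i = (∑ q, x i q * βc r q) - a i := rfl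
      have hψ'e : ψ' i = (∑ q, x i q * bstar q) - a i := rfl
      rw [hψe, hψ'e]
      linear_combination (∑ q, x i q * βc r q - ∑ q, x i q * bstar q) * hηω
    nlinarith [hpg, hring]
  -- put everything together
  have hkey := loglik_ge hR0 x y βc βn π' π' hb hb
  have hsum : ∑ i, ω i / 2 * (((∑ q, x i q * βc r q) - η i)^2 - ((∑ q, x i q * bstar q) - η i)^2)
      ≤ ∑ i, ∑ l, sbar x y βc π' i l *
        (Real.log (nu (x i) βn l * ∏ j, π' j l (y i j))
          - Real.log (nu (x i) βc l * ∏ j, π' j l (y i j))) :=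
    Finset.sum_le_sum fun i _ => hper i
  have hquad : 0 ≤ ∑ i, ω i / 2 *
      (((∑ q, x i q * βc r q) - η i)^2 - ((∑ q, x i q * bstar q) - η i)^2) := by
    have : ∑ i, ω i / 2 * (((∑ q, x i q * βc r q) - η i)^2 - ((∑ q, x i q * bstar q) - η i)^2)
        = (∑ i, ω i * ((∑ q, x i q * βc r q) - η i)^2) / 2
          - (∑ i, ω i * ((∑ q, x i q * bstar q) - η i)^2) / 2 := by
      rw [Finset.sum_congr rfl fun i (_ : i ∈ Finset.univ) =>
        show ω i / 2 * (((∑ q, x i q * βc r q) - η i)^2 - ((∑ q, x i q * bstar q) - η i)^2)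
          = ω i * ((∑ q, x i q * βc r q) - η i)^2 / 2
            - ω i * ((∑ q, x i q * bstar q) - η i)^2 / 2 from by ring,
        Finset.sum_sub_distrib, ← Finset.sum_div, ← Finset.sum_div]
    rw [this]
    linarith [hwls]
  linarith [hkey, hsum, hquad]

end ModelLemmas

/-- Proposition 1: one full iteration of the nested EM algorithm — the closed-form
M-step for the item probabilities `π⁽ᵗ⁺¹⁾_{jr}(y) = Σᵢ s̄ᵢᵣ1(y_{ij}=y)/Σᵢ s̄ᵢᵣ`
followed by the `R − 1` Pólya-gamma weighted least squares cycles for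
`β_1, …, β_{R−1}` (each recomputing responsibilities at `π⁽ᵗ⁺¹⁾` and the most
recent coefficients) — does not decrease the observed-data log-likelihood:
`ℓ(β⁽ᵗ⁺¹⁾, π⁽ᵗ⁺¹⁾) ≥ ℓ(β⁽ᵗ⁾, π⁽ᵗ⁾)`. -/
theorem nestedEM_monotone (n P R J : ℕ) (hn : 0 < n) (hR : 2 ≤ R)
    (K : Fin J → ℕ) (hK : ∀ j, 0 < K j)
    (x : Fin n → Fin P → ℝ) (y : ∀ _ : Fin n, ∀ j : Fin J, Fin (K j))
    (β : Fin R → Fin P → ℝ) (hβlast : β ⟨R - 1, by omega⟩ = 0)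
    (π : ∀ j : Fin J, Fin R → Fin (K j) → ℝ)
    (hπ_pos : ∀ j r yv, 0 < π j r yv)
    (hπ_sum : ∀ j r, ∑ yv, π j r yv = 1)
    (π' : ∀ j : Fin J, Fin R → Fin (K j) → ℝ)
    (hπ' : ∀ j r yv, π' j r yv =
      (∑ i, sbar x y β π i r * (if y i j = yv then (1 : ℝ) else 0)) /
        (∑ i, sbar x y β π i r))
    (hinv : ∀ k (hk : k < R - 1),
      IsUnit (cycleMat x (betaAfter x y π' β k) ⟨k, by omega⟩)) :
    loglik x y (betaAfter x y π' β (R - 1)) π' ≥ loglik x y β π := by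
  have hR0 : 0 < R := by omega
  have hnn : Nonempty (Fin n) := ⟨⟨0, hn⟩⟩
  have ha : ∀ i l, 0 < ∏ j, π j l (y i j) :=
    fun i l => Finset.prod_pos fun j _ => hπ_pos j l _
  have hs : ∀ i l, 0 < sbar x y β π i l := fun i l => sbar_pos hR0 x y β π i l (ha i)
  have hS : ∀ r : Fin R, 0 < ∑ i, sbar x y β π i r :=
    fun r => Finset.sum_pos (fun i _ => hs i r) Finset.univ_nonempty
  have hπ'_obs : ∀ (j : Fin J) (l : Fin R) (i : Fin n), 0 < π' j l (y i j) := by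
    intro j l i
    rw [hπ']
    apply div_pos _ (hS l)
    apply Finset.sum_pos' (fun i' _ => mul_nonneg (hs i' l).le (by split <;> norm_num))
    exact ⟨i, Finset.mem_univ i, by simp [hs i l]⟩
  have hb : ∀ i l, 0 < ∏ j, π' j l (y i j) :=
    fun i l => Finset.prod_pos fun j _ => hπ'_obs j l i
  have h1 : loglik x y β π ≤ loglik x y β π' := pi_step hn hR0 x y β π hπ_pos hπ_sum π' hπ'
  have h2 : ∀ k, k ≤ R - 1 → loglik x y β π' ≤ loglik x y (betaAfter x y π' β k) π' := by
    intro k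
    induction k with
    | zero => intro _; exact le_refl _
    | succ k ih =>
      intro hk
      have hk' : k < R - 1 := by omega
      have hkR : k < R := by omega
      have heq : betaAfter x y π' β (k+1)
          = betaCycle x y π' ⟨k, hkR⟩ (betaAfter x y π' β k) := by
        simp [betaAfter, hkR]
      rw [heq]
      exact le_trans (ih (by omega))
        (cycle_step hR x y π' hb (betaAfter x y π' β k) ⟨k, hkR⟩ (hinv k hk'))
  exact le_trans h1 (h2 (R-1) le_rfl)

end LCR15
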